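/- The function A(θ) = cos((π/2)·cos θ)/sin θ is strictly monotonically increasing on (0, π/2). -/

import Mathlib

open Real Set

theorem dipole_pattern_strictMonoOn :
    StrictMonoOn (fun θ : ℝ => Real.cos (π/2 * Real.cos θ) / Real.sin θ)
      (Ioo (0:ℝ) (π/2)) := by
  have hpi : (0:ℝ) < π := Real.pi_pos
  have hsin_pos : ∀ θ ∈ Ioo (0:ℝ) (π/2), 0 < Real.sin θ := by
    intro θ hθ
    exact Real.sin_pos_of_pos_of_lt_pi hθ.1 (lt_trans hθ.2 (by linarith))
  apply strictMonoOn_of_deriv_pos (convex_Ioo _ _)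
  · apply ContinuousOn.div
    · exact (Real.continuous_cos.comp (continuous_const.mul Real.continuous_cos)).continuousOn
    · exact Real.continuous_sin.continuousOn
    · intro θ hθ; exact (hsin_pos θ hθ).ne'
  · intro θ hθ
    rw [interior_Ioo] at hθ
    obtain ⟨hθ0, hθ2⟩ := hθ
    have hs := hsin_pos θ ⟨hθ0, hθ2⟩
    set c := Real.cos θ with hc
    set s := Real.sin θ with hsdef
    have hc0 : 0 < c := Real.cos_pos_of_mem_Ioo ⟨by linarith, hθ2⟩
    have hc1 : c < 1 := by
      have := Real.cos_lt_cos_of_nonneg_of_le_pi le_rfl (by linarith) hθ0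
      simpa using this
    -- derivative computation
    have h1 : HasDerivAt (fun θ : ℝ => π/2 * Real.cos θ) (π/2 * (-Real.sin θ)) θ :=
      (Real.hasDerivAt_cos θ).const_mul (π/2)
    have h2 : HasDerivAt Real.cos (-Real.sin (π/2 * Real.cos θ)) (π/2 * Real.cos θ) :=
      Real.hasDerivAt_cos _
    have h3 : HasDerivAt (fun θ : ℝ => Real.cos (π/2 * Real.cos θ))
        (-Real.sin (π/2 * Real.cos θ) * (π/2 * (-Real.sin θ))) θ := by have := h2.comp θ h1; exact this
    have h4 : HasDerivAt Real.sin (Real.cos θ) θ := Real.hasDerivAt_sin θ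
    have hf : HasDerivAt (fun θ : ℝ => Real.cos (π/2 * Real.cos θ) / Real.sin θ)
        ((-Real.sin (π/2 * Real.cos θ) * (π/2 * (-Real.sin θ)) * Real.sin θ -
          Real.cos (π/2 * Real.cos θ) * Real.cos θ) / Real.sin θ ^ 2) θ :=
      h3.div h4 hs.ne'
    rw [hf.deriv]
    apply div_pos _ (by positivity)
    -- key inequalities
    have hsinx : c ≤ Real.sin (π/2 * c) := by
      have := Real.mul_le_sin (x := π/2 * c) (by positivity) (by nlinarith)
      have hne : π ≠ 0 := hpi.ne'
      calc c = 2/π * (π/2 * c) := by field_simp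
        _ ≤ Real.sin (π/2 * c) := this
    have hcosx : Real.cos (π/2 * c) < π/2 * (1 - c) := by
      have h5 : Real.cos (π/2 * c) = Real.sin (π/2 - π/2 * c) := by
        rw [Real.sin_pi_div_two_sub]
      rw [h5]
      have : Real.sin (π/2 - π/2 * c) < π/2 - π/2 * c :=
        Real.sin_lt (by nlinarith)
      linarith [this]
    have hsq : Real.sin θ ^ 2 = 1 - Real.cos θ ^ 2 := by
      nlinarith [Real.sin_sq_add_cos_sq θ]
    have goal_eq : -Real.sin (π/2 * Real.cos θ) * (π/2 * -Real.sin θ) * Real.sin θ -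
        Real.cos (π/2 * Real.cos θ) * Real.cos θ =
        π/2 * (1 - Real.cos θ ^ 2) * Real.sin (π/2 * Real.cos θ) -
          Real.cos θ * Real.cos (π/2 * Real.cos θ) := by
      linear_combination (π/2 * Real.sin (π/2 * Real.cos θ)) * hsq
    rw [goal_eq]
    have h1c : (0:ℝ) < 1 - c^2 := by nlinarith
    have hfac : (0:ℝ) < π/2 * (1 - c^2) := mul_pos (by positivity) h1c
    nlinarith [mul_pos (mul_pos hc0 hc0) (sub_pos.2 hc1),
      mul_lt_mul_of_pos_left hcosx hc0,
      mul_le_mul_of_nonneg_left hsinx hfac.le, hpi]
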